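/- Let g : [0,∞) → ℝ³ be a C¹ solution of the Hindmarsh-Rose ODE system u' = au² − bu³ + v − w + J, v' = α − βu² − v, w' = q(u−c) − rw, with all parameters a,b,α,β,q,r,J positive and c real. Define F(u,v,w) as a potential such that the functional Γ(g(t)) = −F(g(t)) computed as the line integral of the vector field along the trajectory satisfies (d/dt)Γ(g(t)) = −|g'(t)|². Then Γ is nonincreasing along trajectories, and if Γ(g(τ)) = Γ(g(0)) for some τ > 0 then g is constant (an equilibrium). -/

import Mathlib

lemma abstract_key (c1 c2 q r C1 C2 P Q R : ℝ)
    (hc1 : c1^2 ≤ C1^2) (hc2 : c2^2 ≤ C2^2) :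
    2*P*(c1*P + Q - R) + 2*Q*(c2*P - Q) + 2*R*(q*P - r*R)
      ≤ (1 + 3*(C1^2+1) + 3*(C2^2+1) + 2*(q^2+r^2)) * (P^2+Q^2+R^2) := by
  have h3 : c1^2*P^2 ≤ C1^2*P^2 := mul_le_mul_of_nonneg_right hc1 (sq_nonneg P)
  have h3' : c2^2*P^2 ≤ C2^2*P^2 := mul_le_mul_of_nonneg_right hc2 (sq_nonneg P)
  have g1 : 2*P*(c1*P + Q - R) ≤ P^2 + 3*(C1^2+1)*(P^2+Q^2+R^2) := by
    nlinarith [sq_nonneg (P - (c1*P + Q - R)), sq_nonneg (c1*P - Q), sq_nonneg (Q + R),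
      sq_nonneg (c1*P + R), sq_nonneg Q, sq_nonneg R, sq_nonneg P,
      mul_nonneg (sq_nonneg C1) (sq_nonneg Q), mul_nonneg (sq_nonneg C1) (sq_nonneg R)]
  have g2 : 2*Q*(c2*P - Q) ≤ Q^2 + 3*(C2^2+1)*(P^2+Q^2+R^2) := by
    nlinarith [sq_nonneg (Q - (c2*P - Q)), sq_nonneg (c2*P + Q), sq_nonneg Q, sq_nonneg R,
      sq_nonneg P, mul_nonneg (sq_nonneg C2) (sq_nonneg Q), mul_nonneg (sq_nonneg C2) (sq_nonneg R)]
  have g3 : 2*R*(q*P - r*R) ≤ R^2 + 2*(q^2+r^2)*(P^2+Q^2+R^2) := by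
    nlinarith [sq_nonneg (R - (q*P - r*R)), sq_nonneg (q*P + r*R),
      mul_nonneg (sq_nonneg q) (sq_nonneg R), mul_nonneg (sq_nonneg r) (sq_nonneg P),
      mul_nonneg (sq_nonneg q) (sq_nonneg Q), mul_nonneg (sq_nonneg r) (sq_nonneg Q)]
  nlinarith [g1, g2, g3]

lemma key_ineq (a b β q r M P Q R x y : ℝ) (hM : 0 ≤ M)
    (hx : |x| ≤ M) (hy : |y| ≤ M) :
    2*P*((a*(x+y) - b*(x^2+x*y+y^2))*P + Q - R) + 2*Q*((-β*(x+y))*P - Q)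
      + 2*R*(q*P - r*R)
    ≤ (1 + 3*((|a| * (2*M) + |b| * (3*M^2))^2+1) + 3*((|β| * (2*M))^2+1) + 2*(q^2+r^2))
      * (P^2+Q^2+R^2) := by
  obtain ⟨hx1, hx2⟩ := abs_le.1 hx
  obtain ⟨hy1, hy2⟩ := abs_le.1 hy
  have hxsq : x^2 ≤ M^2 := by nlinarith
  have hysq : y^2 ≤ M^2 := by nlinarith
  have hxy : |x*y| ≤ M^2 := by
    rw [abs_mul]; nlinarith [abs_nonneg x, abs_nonneg y]
  have hc1 : |a*(x+y) - b*(x^2+x*y+y^2)| ≤ |a| * (2*M) + |b| * (3*M^2) := by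
    calc |a*(x+y) - b*(x^2+x*y+y^2)| ≤ |a*(x+y)| + |b*(x^2+x*y+y^2)| := abs_sub _ _
    _ ≤ _ := by
        rw [abs_mul, abs_mul]
        have h1 : |x+y| ≤ 2*M := by rw [abs_le]; constructor <;> linarith
        have h2 : |x^2+x*y+y^2| ≤ 3*M^2 := by
          calc |x^2+x*y+y^2| ≤ |x^2| + |x*y| + |y^2| := abs_add_three _ _ _
          _ ≤ 3*M^2 := by
              rw [abs_of_nonneg (sq_nonneg x), abs_of_nonneg (sq_nonneg y)]; linarith
        have := abs_nonneg a; have := abs_nonneg b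
        have := abs_nonneg (x+y); have := abs_nonneg (x^2+x*y+y^2)
        nlinarith
  have hc2 : |(-β*(x+y))| ≤ |β| * (2*M) := by
    rw [abs_mul, abs_neg]
    have h1 : |x+y| ≤ 2*M := by rw [abs_le]; constructor <;> linarith
    nlinarith [abs_nonneg β, abs_nonneg (x+y)]
  exact abstract_key _ _ _ _ _ _ _ _ _ (sq_le_sq' (neg_le_of_abs_le hc1) (le_of_abs_le hc1))
    (sq_le_sq' (neg_le_of_abs_le hc2) (le_of_abs_le hc2))

lemma sq3_eq_zero (X Y Z : ℝ) (h : X^2 + Y^2 + Z^2 = 0) : X = 0 ∧ Y = 0 ∧ Z = 0 := by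
  have hX : X^2 = 0 := by linarith [sq_nonneg X, sq_nonneg Y, sq_nonneg Z]
  have hY : Y^2 = 0 := by linarith [sq_nonneg X, sq_nonneg Y, sq_nonneg Z]
  have hZ : Z^2 = 0 := by linarith [sq_nonneg X, sq_nonneg Y, sq_nonneg Z]
  exact ⟨(pow_eq_zero_iff two_ne_zero).mp hX, (pow_eq_zero_iff two_ne_zero).mp hY,
    (pow_eq_zero_iff two_ne_zero).mp hZ⟩

theorem stmt_15 (a b α β q r J c : ℝ)
    (ha : 0 < a) (hb : 0 < b) (hα : 0 < α) (hβ : 0 < β)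
    (hq : 0 < q) (hr : 0 < r) (hJ : 0 < J)
    (u v w Γ : ℝ → ℝ)
    (hu : ∀ t ≥ (0 : ℝ), HasDerivAt u (a * (u t) ^ 2 - b * (u t) ^ 3 + v t - w t + J) t)
    (hv : ∀ t ≥ (0 : ℝ), HasDerivAt v (α - β * (u t) ^ 2 - v t) t)
    (hw : ∀ t ≥ (0 : ℝ), HasDerivAt w (q * (u t - c) - r * w t) t)
    (hΓ : ∀ t ≥ (0 : ℝ), HasDerivAt Γ
      (-((a * (u t) ^ 2 - b * (u t) ^ 3 + v t - w t + J) ^ 2 +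
         (α - β * (u t) ^ 2 - v t) ^ 2 + (q * (u t - c) - r * w t) ^ 2)) t) :
    (∀ s t : ℝ, 0 ≤ s → s ≤ t → Γ t ≤ Γ s) ∧
      (∀ τ > (0 : ℝ), Γ τ = Γ 0 →
        ∀ t ≥ (0 : ℝ), u t = u 0 ∧ v t = v 0 ∧ w t = w 0) := by
  have hmono : ∀ s t : ℝ, 0 ≤ s → s ≤ t → Γ t ≤ Γ s := by
    intro s t hs hst
    have hanti : AntitoneOn Γ (Set.Ici 0) := by
      apply antitoneOn_of_deriv_nonpos (convex_Ici 0)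
      · exact fun x hx => (hΓ x hx).continuousAt.continuousWithinAt
      · intro x hx
        rw [interior_Ici] at hx
        exact (hΓ x (le_of_lt hx)).differentiableAt.differentiableWithinAt
      · intro x hx
        rw [interior_Ici] at hx
        rw [(hΓ x (le_of_lt hx)).deriv]
        have : 0 ≤ (a * (u x) ^ 2 - b * (u x) ^ 3 + v x - w x + J) ^ 2 +
            (α - β * (u x) ^ 2 - v x) ^ 2 + (q * (u x - c) - r * w x) ^ 2 := by positivity
        linarith
    exact hanti hs (hs.trans hst) hst
  refine ⟨hmono, ?_⟩
  intro τ hτ hΓτ t ht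
  -- step 1: the initial point is an equilibrium
  have hconst : Set.EqOn Γ (fun _ => Γ 0) (Set.Icc 0 τ) := by
    intro s hs
    exact le_antisymm (hmono 0 s le_rfl hs.1) (hΓτ ▸ hmono s τ hs.1 hs.2)
  have h0τ : (0:ℝ) ∈ Set.Icc 0 τ := ⟨le_rfl, hτ.le⟩
  have hder0 : HasDerivWithinAt Γ 0 (Set.Icc 0 τ) 0 :=
    (hasDerivWithinAt_const 0 (Set.Icc 0 τ) (Γ 0)).congr hconst (hconst h0τ)
  have hud : UniqueDiffWithinAt ℝ (Set.Icc 0 τ) 0 := uniqueDiffOn_Icc hτ 0 h0τ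
  have hd1 := ((hΓ 0 le_rfl).hasDerivWithinAt (s := Set.Icc 0 τ)).derivWithin hud
  have hd2 := hder0.derivWithin hud
  have hzero : (a * (u 0) ^ 2 - b * (u 0) ^ 3 + v 0 - w 0 + J) ^ 2 +
         (α - β * (u 0) ^ 2 - v 0) ^ 2 + (q * (u 0 - c) - r * w 0) ^ 2 = 0 := by
    rw [hd1] at hd2; linarith
  obtain ⟨hA0, hB0, hC0⟩ := sq3_eq_zero _ _ _ hzero
  -- step 2: a Gronwall-type argument shows the trajectory stays at the equilibrium
  have h0mem : (0:ℝ) ∈ Set.Icc 0 t := ⟨le_rfl, ht⟩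
  have hucont : ContinuousOn u (Set.Icc 0 t) :=
    fun x hx => (hu x hx.1).continuousAt.continuousWithinAt
  obtain ⟨M, hMb⟩ := isCompact_Icc.exists_bound_of_continuousOn hucont
  have hM0 : (0:ℝ) ≤ M := le_trans (norm_nonneg _) (hMb 0 h0mem)
  set K : ℝ := 1 + 3*((|a| * (2*M) + |b| * (3*M^2))^2+1) + 3*((|β| * (2*M))^2+1)
      + 2*(q^2+r^2) with hKdef
  set φ : ℝ → ℝ := fun x => (u x - u 0)^2 + (v x - v 0)^2 + (w x - w 0)^2 with hφdef
  set E : ℝ → ℝ := fun x => φ x * Real.exp (-K*x) with hEdef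
  have hEd : ∀ x ≥ (0:ℝ), HasDerivAt E
      ((2*(u x - u 0)*(a * (u x) ^ 2 - b * (u x) ^ 3 + v x - w x + J)
        + 2*(v x - v 0)*(α - β * (u x) ^ 2 - v x)
        + 2*(w x - w 0)*(q * (u x - c) - r * w x)
        - K * φ x) * Real.exp (-K*x)) x := by
    intro x hx
    have h1 : HasDerivAt (fun y => (u y - u 0)^2)
        (2*(u x - u 0)*(a * (u x) ^ 2 - b * (u x) ^ 3 + v x - w x + J)) x := by
      have := ((hu x hx).sub_const (u 0)).fun_pow 2
      exact this.congr_deriv (by push_cast; ring)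
    have h2 : HasDerivAt (fun y => (v y - v 0)^2)
        (2*(v x - v 0)*(α - β * (u x) ^ 2 - v x)) x := by
      have := ((hv x hx).sub_const (v 0)).fun_pow 2
      exact this.congr_deriv (by push_cast; ring)
    have h3 : HasDerivAt (fun y => (w y - w 0)^2)
        (2*(w x - w 0)*(q * (u x - c) - r * w x)) x := by
      have := ((hw x hx).sub_const (w 0)).fun_pow 2
      exact this.congr_deriv (by push_cast; ring)
    have hφd := (h1.fun_add h2).fun_add h3
    have hlin : HasDerivAt (fun y : ℝ => -K*y) (-K) x := by
      simpa using (hasDerivAt_id x).const_mul (-K)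
    have hexp := hlin.exp
    have := hφd.fun_mul hexp
    refine this.congr_deriv ?_
    simp only [hφdef]
    ring
  have hanti : AntitoneOn E (Set.Icc 0 t) := by
    apply antitoneOn_of_deriv_nonpos (convex_Icc 0 t)
    · exact fun x hx => (hEd x hx.1).continuousAt.continuousWithinAt
    · intro x hx
      rw [interior_Icc] at hx
      exact (hEd x hx.1.le).differentiableAt.differentiableWithinAt
    · intro x hx
      rw [interior_Icc] at hx
      rw [(hEd x hx.1.le).deriv]
      have hxmem : x ∈ Set.Icc 0 t := ⟨hx.1.le, hx.2.le⟩
      apply mul_nonpos_of_nonpos_of_nonneg _ (Real.exp_nonneg _)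
      have e1 : a * (u x) ^ 2 - b * (u x) ^ 3 + v x - w x + J
          = (a*(u x + u 0) - b*((u x)^2 + u x * u 0 + (u 0)^2))*(u x - u 0)
            + (v x - v 0) - (w x - w 0) := by linear_combination hA0
      have e2 : α - β * (u x) ^ 2 - v x
          = (-β*(u x + u 0))*(u x - u 0) - (v x - v 0) := by linear_combination hB0
      have e3 : q * (u x - c) - r * w x
          = q*(u x - u 0) - r*(w x - w 0) := by linear_combination hC0
      have hb1 : |u x| ≤ M := by rw [← Real.norm_eq_abs]; exact hMb x hxmem
      have hb2 : |u 0| ≤ M := by rw [← Real.norm_eq_abs]; exact hMb 0 h0mem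
      have hk := key_ineq a b β q r M (u x - u 0) (v x - v 0) (w x - w 0) (u x) (u 0)
        hM0 hb1 hb2
      rw [e1, e2, e3]
      simp only [hφdef, hKdef]
      linarith
  have hE0 : E 0 = 0 := by simp [hEdef, hφdef]
  have hEt : E t ≤ 0 := by
    have := hanti h0mem ⟨ht, le_rfl⟩ ht
    rwa [hE0] at this
  have hφnn : 0 ≤ φ t := by simp only [hφdef]; positivity
  have hEt' : (0:ℝ) ≤ E t := mul_nonneg hφnn (Real.exp_nonneg _)
  have hEt0 : E t = 0 := le_antisymm hEt hEt'
  have hφt : φ t = 0 := by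
    have hexpne := Real.exp_ne_zero (-K*t)
    simp only [hEdef] at hEt0
    exact (mul_eq_zero.1 hEt0).resolve_right hexpne
  simp only [hφdef] at hφt
  have h1 : (u t - u 0)^2 = 0 := by linarith [sq_nonneg (u t - u 0), sq_nonneg (v t - v 0), sq_nonneg (w t - w 0)]
  have h2 : (v t - v 0)^2 = 0 := by linarith [sq_nonneg (u t - u 0), sq_nonneg (v t - v 0), sq_nonneg (w t - w 0)]
  have h3 : (w t - w 0)^2 = 0 := by linarith [sq_nonneg (u t - u 0), sq_nonneg (v t - v 0), sq_nonneg (w t - w 0)]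
  refine ⟨?_, ?_, ?_⟩
  · have := (pow_eq_zero_iff two_ne_zero).mp h1; linarith [sub_eq_zero.1 this]
  · have := (pow_eq_zero_iff two_ne_zero).mp h2; linarith [sub_eq_zero.1 this]
  · have := (pow_eq_zero_iff two_ne_zero).mp h3; linarith [sub_eq_zero.1 this]
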